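/- Let w_T : ℝ^d → ℝ^d be the vector field w_T(x) = (1/(d+2)) · (b_T^NC(x) − 2λ_0(x) + 2/d) · ∑_{i=1}^d λ_i(x) (v_i − v_0). Then w_T is differentiable and div w_T(x) = b_T^NC(x) for every x ∈ ℝ^d. -/

import Mathlib

open MeasureTheory Finset

noncomputable section

noncomputable def divg {d : ℕ} (w : EuclideanSpace ℝ (Fin d) → EuclideanSpace ℝ (Fin d))
    (x : EuclideanSpace ℝ (Fin d)) : ℝ :=
  ∑ i, fderiv ℝ w x (EuclideanSpace.single i 1) i

noncomputable def bNC {d : ℕ} (L : Fin (d + 1) → (EuclideanSpace ℝ (Fin d) →ᵃ[ℝ] ℝ))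
    (x : EuclideanSpace ℝ (Fin d)) : ℝ :=
  2 - ((d : ℝ) + 1) * ∑ i, (L i x) ^ 2

namespace Stmt0Aux

abbrev E (d : ℕ) := EuclideanSpace ℝ (Fin d)

lemma aff_hasFDerivAt {d : ℕ} (A : E d →ᵃ[ℝ] ℝ) (x : E d) :
    HasFDerivAt (fun y => A y) (LinearMap.toContinuousLinearMap A.linear) x := by
  have h : (fun y => A y) = fun y => A.linear y + A 0 := by
    funext y; rw [AffineMap.decomp A]; simp
  rw [h]
  exact ((LinearMap.toContinuousLinearMap A.linear).hasFDerivAt).add_const _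

lemma clm_sum_single {d : ℕ} (φ : E d →L[ℝ] ℝ) (y : E d) :
    ∑ k, y k * φ (EuclideanSpace.single k 1) = φ y := by
  have hy : y = ∑ k, y k • EuclideanSpace.single k (1:ℝ) := by
    ext j
    rw [WithLp.ofLp_sum, Finset.sum_apply]
    · simp [EuclideanSpace.single_apply]
  conv_rhs => rw [hy]
  rw [map_sum]
  simp [mul_comm]

lemma sum_L_eq_one (d : ℕ) (hd : 2 ≤ d) (v : Fin (d + 1) → E d)
    (hv : AffineIndependent ℝ v)
    (L : Fin (d + 1) → (E d →ᵃ[ℝ] ℝ))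
    (hL : ∀ i j, L i (v j) = if i = j then 1 else 0) (x : E d) :
    ∑ i, L i x = 1 := by
  have hli : LinearIndependent ℝ (fun i : {j : Fin (d+1) // j ≠ 0} => v i -ᵥ v 0) :=
    (affineIndependent_iff_linearIndependent_vsub ℝ v 0).mp hv
  have hcard : Fintype.card {j : Fin (d+1) // j ≠ 0} = Module.finrank ℝ (E d) := by
    simp [Fintype.card_subtype_compl]
  have hne : Nonempty {j : Fin (d+1) // j ≠ 0} := by
    refine ⟨⟨1, ?_⟩⟩
    simp [Fin.ext_iff]
    omega
  let b : Module.Basis {j : Fin (d+1) // j ≠ 0} ℝ (E d) :=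
    basisOfLinearIndependentOfCardEqFinrank hli hcard
  have hb : ∀ i, b i = v i - v 0 := by
    intro i
    rw [coe_basisOfLinearIndependentOfCardEqFinrank]; exact (vsub_eq_sub _ _)
  have hM : (∑ i, (L i).linear) = 0 := by
    apply b.ext
    intro j
    rw [hb]
    simp only [LinearMap.coe_sum, Finset.sum_apply, LinearMap.zero_apply]
    have : ∀ i : Fin (d+1), (L i).linear (v j - v 0)
        = (if i = (j:Fin (d+1)) then 1 else 0) - (if i = 0 then 1 else 0) := by
      intro i
      have := (L i).linearMap_vsub (v j) (v 0)
      simp only [vsub_eq_sub] at this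
      rw [this, hL, hL]
    rw [Finset.sum_congr rfl fun i _ => this i]
    rw [Finset.sum_sub_distrib]
    simp [j.2]
  have hx : ∀ i, L i x = L i (v 0) + (L i).linear (x - v 0) := by
    intro i
    have := (L i).linearMap_vsub x (v 0)
    simp only [vsub_eq_sub] at this
    linarith [this]
  rw [Finset.sum_congr rfl fun i _ => hx i, Finset.sum_add_distrib]
  have h1 : ∑ i, L i (v 0) = 1 := by simp [hL]
  have h2 : ∑ i : Fin (d+1), (L i).linear (x - v 0) = 0 := by
    have := congrArg (fun M => M (x - v 0)) hM
    simpa using this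
  rw [h1, h2, add_zero]

end Stmt0Aux

open Stmt0Aux in
theorem stmt0 (d : ℕ) (hd : 2 ≤ d)
    (v : Fin (d + 1) → EuclideanSpace ℝ (Fin d))
    (hv : AffineIndependent ℝ v)
    (L : Fin (d + 1) → (EuclideanSpace ℝ (Fin d) →ᵃ[ℝ] ℝ))
    (hL : ∀ i j, L i (v j) = if i = j then 1 else 0)
    (wT : EuclideanSpace ℝ (Fin d) → EuclideanSpace ℝ (Fin d))
    (hwT : ∀ x, wT x = ((1 : ℝ) / ((d : ℝ) + 2)) •
      ((bNC L x - 2 * L 0 x + 2 / (d : ℝ)) •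
        ∑ i ∈ Finset.univ.erase (0 : Fin (d + 1)), L i x • (v i - v 0))) :
    Differentiable ℝ wT ∧ ∀ x, divg wT x = bNC L x := by
  have hd0 : (d:ℝ) ≠ 0 := by
    have : (0:ℝ) < d := by exact_mod_cast Nat.lt_of_lt_of_le (by norm_num) hd
    linarith
  have hd2 : ((d:ℝ) + 2) ≠ 0 := by positivity
  set g : Fin (d+1) → (EuclideanSpace ℝ (Fin d) →L[ℝ] ℝ) :=
    fun i => LinearMap.toContinuousLinearMap (L i).linear with hgdef
  have hg : ∀ i x, HasFDerivAt (fun y => L i y) (g i) x := fun i x => aff_hasFDerivAt (L i) x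
  have hgv : ∀ i j, g i (v j - v 0)
      = (if i = j then (1:ℝ) else 0) - (if i = 0 then 1 else 0) := by
    intro i j
    have := (L i).linearMap_vsub (v j) (v 0)
    simp only [vsub_eq_sub] at this
    have hgi : g i (v j - v 0) = (L i).linear (v j - v 0) := rfl
    rw [hgi, this, hL, hL]
  set u : EuclideanSpace ℝ (Fin d) → EuclideanSpace ℝ (Fin d) :=
    fun x => ∑ i ∈ Finset.univ.erase (0 : Fin (d+1)), L i x • (v i - v 0) with hudef
  set U : EuclideanSpace ℝ (Fin d) →L[ℝ] EuclideanSpace ℝ (Fin d) :=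
    ∑ i ∈ Finset.univ.erase (0 : Fin (d+1)), (g i).smulRight (v i - v 0) with hUdef
  have hu : ∀ x, HasFDerivAt u U x := by
    intro x
    exact HasFDerivAt.fun_sum fun i _ => (hg i x).smul_const (v i - v 0)
  set f : EuclideanSpace ℝ (Fin d) → ℝ :=
    fun x => bNC L x - 2 * L 0 x + 2 / (d:ℝ) with hfdef
  set F : EuclideanSpace ℝ (Fin d) → (EuclideanSpace ℝ (Fin d) →L[ℝ] ℝ) :=
    fun x => (-(((d:ℝ)+1)) • ∑ i, (2 * L i x) • g i) - (2:ℝ) • g 0 with hFdef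
  have hf : ∀ x, HasFDerivAt f (F x) x := by
    intro x
    have hQ : HasFDerivAt (fun y => ∑ i, (L i y)^2) (∑ i, (2 * L i x) • g i) x := by
      apply HasFDerivAt.fun_sum
      intro i _
      have h2 : HasFDerivAt (fun y => L i y * L i y)
          ((L i x) • g i + (L i x) • g i) x := (hg i x).mul (hg i x)
      have : (fun y => (L i y)^2) = fun y => L i y * L i y := by
        funext y; ring
      rw [this]
      refine h2.congr_fderiv ?_
      rw [← add_smul]
      ring_nf
    have hb : HasFDerivAt (fun y => 2 - ((d:ℝ)+1) * ∑ i, (L i y)^2)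
        (-(((d:ℝ)+1) • ∑ i, (2 * L i x) • g i)) x := by
      have := (hQ.const_mul (((d:ℝ)+1))).const_sub 2
      convert this using 2
    have := (hb.fun_sub ((hg 0 x).const_mul 2)).add_const (2 / (d:ℝ))
    have heq : (fun y => 2 - ((d:ℝ)+1) * ∑ i, (L i y)^2 - 2 * L 0 y + 2 / (d:ℝ)) = f := by
      funext y; simp [hfdef, bNC]
    rw [heq] at this
    refine this.congr_fderiv ?_
    rw [hFdef]
    ext h
    simp [smul_smul]
    ring
  set c : ℝ := (1:ℝ) / ((d:ℝ) + 2) with hcdef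
  set D : EuclideanSpace ℝ (Fin d) → (EuclideanSpace ℝ (Fin d) →L[ℝ] EuclideanSpace ℝ (Fin d)) :=
    fun x => c • ((f x) • U + (F x).smulRight (u x)) with hDdef
  have hwT' : wT = fun x => c • ((f x) • u x) := funext hwT
  have hw : ∀ x, HasFDerivAt wT (D x) x := by
    intro x
    rw [hwT']
    exact ((hf x).smul (hu x)).const_smul c
  refine ⟨fun x => (hw x).differentiableAt, fun x => ?_⟩
  -- compute the divergence
  have hfd : fderiv ℝ wT x = D x := (hw x).fderiv
  rw [divg, hfd]
  have happ : ∀ k : Fin d, (D x) (EuclideanSpace.single k 1) k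
      = c * (f x * (U (EuclideanSpace.single k 1)) k
          + (F x (EuclideanSpace.single k 1)) * (u x) k) := by
    intro k
    simp [hDdef, mul_add]
  rw [Finset.sum_congr rfl fun k _ => happ k]
  rw [← Finset.mul_sum]
  have hsplit : ∑ k, (f x * (U (EuclideanSpace.single k 1)) k
          + (F x (EuclideanSpace.single k 1)) * (u x) k)
      = f x * (∑ k, (U (EuclideanSpace.single k 1)) k)
        + ∑ k, (u x) k * (F x (EuclideanSpace.single k 1)) := by
    rw [Finset.sum_add_distrib, Finset.mul_sum]
    congr 1
    apply Finset.sum_congr rfl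
    intro k _
    ring
  rw [hsplit]
  -- divergence of u is d
  have hA : ∑ k, (U (EuclideanSpace.single k 1)) k = (d:ℝ) := by
    have h1 : ∀ k : Fin d, (U (EuclideanSpace.single k 1)) k
        = ∑ i ∈ Finset.univ.erase (0 : Fin (d+1)),
            (v i - v 0) k * (g i) (EuclideanSpace.single k 1) := by
      intro k
      rw [hUdef, ContinuousLinearMap.sum_apply]
      rw [WithLp.ofLp_sum, Finset.sum_apply]
      · apply Finset.sum_congr rfl
        intro i _
        simp [mul_comm]
    rw [Finset.sum_congr rfl fun k _ => h1 k, Finset.sum_comm]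
    have h2 : ∀ i ∈ Finset.univ.erase (0 : Fin (d+1)),
        ∑ k, (v i - v 0) k * (g i) (EuclideanSpace.single k 1) = 1 := by
      intro i hi
      rw [clm_sum_single, hgv]
      have : i ≠ 0 := (Finset.mem_erase.mp hi).1
      simp [this]
    rw [Finset.sum_congr rfl h2]
    simp [Finset.card_erase_of_mem]
  rw [hA, clm_sum_single (F x) (u x)]
  -- compute F x (u x)
  have hFu : F x (u x) = ∑ j ∈ Finset.univ.erase (0 : Fin (d+1)),
      L j x * (-(2*((d:ℝ)+1)) * (L j x - L 0 x) + 2) := by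
    rw [hudef]
    simp only [map_sum, _root_.map_smul, smul_eq_mul]
    apply Finset.sum_congr rfl
    intro j hj
    have hj0 : j ≠ 0 := (Finset.mem_erase.mp hj).1
    congr 1
    rw [hFdef]
    simp only [ContinuousLinearMap.sub_apply, ContinuousLinearMap.smul_apply,
      ContinuousLinearMap.sum_apply, smul_eq_mul]
    have hsum : ∑ i, (2 * L i x) * (g i) (v j - v 0) = 2 * L j x - 2 * L 0 x := by
      rw [Finset.sum_congr rfl fun i _ => by rw [hgv i j]]
      simp only [mul_sub, mul_ite, mul_one, mul_zero]
      rw [Finset.sum_sub_distrib]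
      rw [Finset.sum_ite_eq' Finset.univ j, Finset.sum_ite_eq' Finset.univ 0]
      simp
    rw [hgv 0 j]
    rw [hsum]
    have : (0:Fin (d+1)) ≠ j := fun h => hj0 h.symm
    simp [this]
    ring
  rw [hFu]
  -- final algebra
  have hS := sum_L_eq_one d hd v hv L hL x
  set lam : Fin (d+1) → ℝ := fun i => L i x with hlam
  have hS1 : lam 0 + ∑ j ∈ Finset.univ.erase (0 : Fin (d+1)), lam j = 1 := by
    rw [Finset.add_sum_erase _ _ (Finset.mem_univ 0)]
    exact hS
  have hQ1 : lam 0 ^ 2 + ∑ j ∈ Finset.univ.erase (0 : Fin (d+1)), lam j ^ 2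
      = ∑ i, lam i ^ 2 :=
    Finset.add_sum_erase Finset.univ (fun j => lam j ^ 2) (Finset.mem_univ 0)
  set s1 := ∑ j ∈ Finset.univ.erase (0 : Fin (d+1)), lam j with hs1
  set s2 := ∑ j ∈ Finset.univ.erase (0 : Fin (d+1)), lam j ^ 2 with hs2
  have hB : ∑ j ∈ Finset.univ.erase (0 : Fin (d+1)),
      lam j * (-(2*((d:ℝ)+1)) * (lam j - lam 0) + 2)
      = -(2*((d:ℝ)+1)) * s2 + 2*((d:ℝ)+1) * lam 0 * s1 + 2 * s1 := by
    rw [hs1, hs2, Finset.mul_sum, Finset.mul_sum, Finset.mul_sum,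
      ← Finset.sum_add_distrib, ← Finset.sum_add_distrib]
    apply Finset.sum_congr rfl
    intro j _
    ring
  rw [hB]
  rw [bNC]
  have hQ : ∑ i, (L i x)^2 = lam 0 ^2 + s2 := by rw [← hQ1]
  rw [hQ]
  have hs1v : s1 = 1 - lam 0 := by linarith
  rw [hs1v]
  have hfx : f x = 2 - ((d:ℝ)+1) * (lam 0 ^2 + s2) - 2 * lam 0 + 2/(d:ℝ) := by
    rw [hfdef]
    simp only [bNC]
    rw [hQ]
  rw [hfx, hcdef]
  field_simp
  ring
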